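/- Let V be a nonnegative integrable random variable and U uniform on (0,1) independent of V, and set X = UV. If f(α) := E[exp(-αX)], then for every α > 0, E[exp(-αV)] = f(α) + α·f'(α), i.e., the Laplace transform of V equals the derivative of α ↦ α·f(α). -/

import Mathlib

open MeasureTheory ProbabilityTheory Real

/-- If `V` is nonnegative and integrable, `U` is uniform on `(0,1)` independent of `V`,
`X = UV`, and `f(α) = E[exp(-αX)]`, then for every `α > 0` the function `f` is
differentiable at `α` and `E[exp(-αV)] = f(α) + α f'(α)`. -/
theorem laplace_V_eq_deriv_of_uniform_split
    {Ω : Type*} [MeasurableSpace Ω] (P : Measure Ω) [IsProbabilityMeasure P]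
    (U V : Ω → ℝ) (hUm : Measurable U) (hVm : Measurable V)
    (hU : Measure.map U P = volume.restrict (Set.Ioo (0 : ℝ) 1))
    (hV : ∀ ω, 0 ≤ V ω) (hVint : Integrable V P)
    (hInd : IndepFun U V P)
    (f : ℝ → ℝ)
    (hf : ∀ α : ℝ, f α = ∫ ω, Real.exp (-(α * (U ω * V ω))) ∂P) :
    ∀ α : ℝ, 0 < α → ∃ d : ℝ, HasDerivAt f d α ∧
      ∫ ω, Real.exp (-(α * V ω)) ∂P = f α + α * d := by
  intro α hα
  have hXm : Measurable fun ω => U ω * V ω := hUm.mul hVm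
  -- a.e. facts
  have hUae : ∀ᵐ ω ∂P, U ω ∈ Set.Ioo (0 : ℝ) 1 := by
    have h1 : ∀ᵐ y ∂(Measure.map U P), y ∈ Set.Ioo (0 : ℝ) 1 := by
      rw [hU]; exact ae_restrict_mem measurableSet_Ioo
    exact (ae_map_iff hUm.aemeasurable measurableSet_Ioo).mp h1
  -- derivative of f at α
  have hFmeas : ∀ x : ℝ, AEStronglyMeasurable
      (fun ω => Real.exp (-(x * (U ω * V ω)))) P := by
    intro x
    exact ((hXm.const_mul x).neg.exp).aestronglyMeasurable
  have hFint : Integrable (fun ω => Real.exp (-(α * (U ω * V ω)))) P := by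
    refine Integrable.mono' (integrable_const 1) (hFmeas α) ?_
    filter_upwards [hUae] with ω hω
    rw [Real.norm_eq_abs, abs_of_pos (Real.exp_pos _)]
    apply Real.exp_le_one_iff.mpr
    simp only [neg_nonpos]
    exact mul_nonneg hα.le (mul_nonneg hω.1.le (hV ω))
  have hF'meas : AEStronglyMeasurable
      (fun ω => -(U ω * V ω) * Real.exp (-(α * (U ω * V ω)))) P :=
    (hXm.neg.mul ((hXm.const_mul α).neg.exp)).aestronglyMeasurable
  have h_bound : ∀ᵐ ω ∂P, ∀ x ∈ Metric.ball α α,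
      ‖-(U ω * V ω) * Real.exp (-(x * (U ω * V ω)))‖ ≤ V ω := by
    filter_upwards [hUae] with ω hω x hx
    have hx0 : 0 < x := by
      have := abs_lt.mp (by simpa [Real.dist_eq] using hx)
      linarith [this.1]
    have huv : 0 ≤ U ω * V ω := mul_nonneg hω.1.le (hV ω)
    rw [norm_mul, norm_neg, Real.norm_eq_abs, Real.norm_eq_abs,
      abs_of_nonneg huv, abs_of_pos (Real.exp_pos _)]
    calc U ω * V ω * Real.exp (-(x * (U ω * V ω)))
        ≤ U ω * V ω * 1 := by
          apply mul_le_mul_of_nonneg_left _ huv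
          exact Real.exp_le_one_iff.mpr (by simpa using mul_nonneg hx0.le huv)
      _ = U ω * V ω := mul_one _
      _ ≤ 1 * V ω := mul_le_mul_of_nonneg_right hω.2.le (hV ω)
      _ = V ω := one_mul _
  have h_diff : ∀ᵐ ω ∂P, ∀ x ∈ Metric.ball α α,
      HasDerivAt (fun x => Real.exp (-(x * (U ω * V ω))))
        (-(U ω * V ω) * Real.exp (-(x * (U ω * V ω)))) x := by
    filter_upwards with ω x _
    have h1 : HasDerivAt (fun x : ℝ => -(x * (U ω * V ω))) (-(U ω * V ω)) x := by
      have h := ((hasDerivAt_id x).mul_const (U ω * V ω)).neg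
      simp only [one_mul] at h
      exact h
    simpa [mul_comm] using h1.exp
  have hmain := hasDerivAt_integral_of_dominated_loc_of_deriv_le (Metric.ball_mem_nhds α hα)
    (Filter.Eventually.of_forall hFmeas) hFint hF'meas h_bound hVint h_diff
  obtain ⟨hF'int, hder⟩ := hmain
  have hfeq : f = fun x => ∫ ω, Real.exp (-(x * (U ω * V ω))) ∂P := funext hf
  set d : ℝ := ∫ ω, -(U ω * V ω) * Real.exp (-(α * (U ω * V ω))) ∂P with hd
  refine ⟨d, by rw [hfeq]; exact hder, ?_⟩
  -- the identity via independence
  set μ : Measure ℝ := volume.restrict (Set.Ioo (0 : ℝ) 1) with hμ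
  set ν : Measure ℝ := Measure.map V P with hν
  haveI : IsProbabilityMeasure μ := ⟨by
    rw [hμ, Measure.restrict_apply_univ, Real.volume_Ioo]; norm_num⟩
  haveI : IsProbabilityMeasure ν := Measure.isProbabilityMeasure_map hVm.aemeasurable
  have hVae : ∀ᵐ v ∂ν, 0 ≤ v := by
    rw [hν]
    exact (ae_map_iff hVm.aemeasurable measurableSet_Ici).mpr
      (Filter.Eventually.of_forall hV)
  have hmap : Measure.map (fun ω => (V ω, U ω)) P = ν.prod μ := by
    rw [← hU]
    exact (indepFun_iff_map_prod_eq_prod_map_map hVm.aemeasurable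
      hUm.aemeasurable).mp hInd.symm
  set g : ℝ × ℝ → ℝ := fun p => (1 - α * (p.2 * p.1)) * Real.exp (-(α * (p.2 * p.1)))
    with hg
  have hgc : Continuous g := by
    apply Continuous.mul
    · exact continuous_const.sub (continuous_const.mul (continuous_snd.mul continuous_fst))
    · exact ((continuous_const.mul (continuous_snd.mul continuous_fst)).neg).rexp
  -- integrability of g on ν.prod μ
  have hid_int : Integrable (fun v : ℝ => v) ν := by
    have h : Integrable id ν := by
      rw [hν, integrable_map_measure aestronglyMeasurable_id hVm.aemeasurable]
      exact hVint
    exact h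
  have hgint : Integrable g (ν.prod μ) := by
    rw [integrable_prod_iff (hgc.aestronglyMeasurable)]
    constructor
    · filter_upwards with v
      rw [hμ]
      exact ((hgc.comp (Continuous.prodMk_right v)).integrableOn_Icc).mono_set
        Set.Ioo_subset_Icc_self
    · refine Integrable.mono' ((integrable_const 1).add (hid_int.const_mul α))
        (hgc.aestronglyMeasurable.norm.integral_prod_right') ?_
      filter_upwards [hVae] with v hv
      rw [Real.norm_eq_abs, abs_of_nonneg (integral_nonneg fun u => norm_nonneg _)]
      have hb : ∀ᵐ u ∂μ, ‖‖g (v, u)‖‖ ≤ 1 + α * v := by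
        rw [hμ]
        filter_upwards [ae_restrict_mem measurableSet_Ioo] with u hu
        have huv : 0 ≤ α * (u * v) := mul_nonneg hα.le (mul_nonneg hu.1.le hv)
        rw [norm_norm, hg]
        simp only [norm_mul, Real.norm_eq_abs, abs_of_pos (Real.exp_pos _)]
        calc |1 - α * (u * v)| * Real.exp (-(α * (u * v)))
            ≤ (1 + α * (u * v)) * 1 := by
              apply mul_le_mul _ (Real.exp_le_one_iff.mpr (by simpa using huv))
                (Real.exp_pos _).le (by positivity)
              rw [abs_sub_comm]
              calc |α * (u * v) - 1| ≤ |α * (u * v)| + |(1:ℝ)| := abs_sub _ _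
                _ = α * (u * v) + 1 := by rw [abs_of_nonneg huv, abs_one]
                _ = 1 + α * (u * v) := add_comm _ _
          _ = 1 + α * (u * v) := mul_one _
          _ ≤ 1 + α * v := by
              have : α * (u * v) ≤ α * v := by
                calc α * (u * v) ≤ α * (1 * v) := by
                      apply mul_le_mul_of_nonneg_left _ hα.le
                      exact mul_le_mul_of_nonneg_right hu.2.le hv
                  _ = α * v := by ring
              linarith
      calc ∫ u, ‖g (v, u)‖ ∂μ ≤ ∫ _, (1 + α * v) ∂μ := by
            apply integral_mono_of_nonneg (Filter.Eventually.of_forall fun u => norm_nonneg _)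
              (integrable_const _)
            filter_upwards [hb] with u hu
            simpa using hu
        _ = 1 + α * v := by simp
  -- compute the double integral
  have hinner : ∀ v : ℝ, ∫ u, g (v, u) ∂μ = Real.exp (-(α * v)) := by
    intro v
    have hderH : ∀ u ∈ Set.uIcc (0 : ℝ) 1,
        HasDerivAt (fun u : ℝ => u * Real.exp (-(α * (u * v))))
          ((1 - α * (u * v)) * Real.exp (-(α * (u * v)))) u := by
      intro u _
      have h1 : HasDerivAt (fun u : ℝ => -(α * (u * v))) (-(α * v)) u := by
        have h := (((hasDerivAt_id u).mul_const v).const_mul α).neg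
        simp only [one_mul] at h
        exact h
      have h2 := h1.exp
      have h3 := (hasDerivAt_id u).mul h2
      refine h3.congr_deriv ?_
      simp only [id_eq, one_mul]
      ring
    have hcont : Continuous fun u : ℝ => (1 - α * (u * v)) * Real.exp (-(α * (u * v))) := by
      apply Continuous.mul
      · exact continuous_const.sub (continuous_const.mul ((continuous_id.mul continuous_const)))
      · exact ((continuous_const.mul (continuous_id.mul continuous_const)).neg).rexp
    have hFTC := intervalIntegral.integral_eq_sub_of_hasDerivAt hderH
      (hcont.intervalIntegrable 0 1)
    rw [hμ]
    have : ∫ u in Set.Ioo (0:ℝ) 1, (1 - α * (u * v)) * Real.exp (-(α * (u * v)))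
        = Real.exp (-(α * v)) := by
      rw [← integral_Ioc_eq_integral_Ioo, ← intervalIntegral.integral_of_le zero_le_one]
      rw [hFTC]; simp
    simpa [hg] using this
  have hchange : ∫ ω, g (V ω, U ω) ∂P = ∫ p, g p ∂(ν.prod μ) := by
    rw [← hmap, integral_map (hVm.prodMk hUm).aemeasurable hgc.aestronglyMeasurable]
  have hdouble : ∫ p, g p ∂(ν.prod μ) = ∫ ω, Real.exp (-(α * V ω)) ∂P := by
    rw [integral_prod g hgint]
    have : ∀ v : ℝ, (∫ u, g (v, u) ∂μ) = Real.exp (-(α * v)) := hinner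
    simp_rw [this]
    rw [hν]
    exact integral_map hVm.aemeasurable (Continuous.aestronglyMeasurable (by fun_prop))
  -- put it together
  have hsplit : ∫ ω, g (V ω, U ω) ∂P = f α + α * d := by
    have hgω : (fun ω => g (V ω, U ω))
        = fun ω => Real.exp (-(α * (U ω * V ω)))
          + α * (-(U ω * V ω) * Real.exp (-(α * (U ω * V ω)))) := by
      funext ω; rw [hg]; ring
    rw [hgω, integral_add hFint (hF'int.const_mul α), integral_const_mul, ← hf α, ← hd]
  rw [← hchange, hsplit] at hdouble
  exact hdouble.symm
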